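/- For λ > 0 and all x > 0, 1 - F_λ(x) > (2φ(x)/x)[1 - (1 + 1/(λ²√(2πe))) x^{-2}], where F_λ is the skew-normal cdf with parameter λ. -/

import Mathlib

open Real MeasureTheory Filter Set Topology

noncomputable def stdPhi (x : ℝ) : ℝ := (Real.sqrt (2 * Real.pi))⁻¹ * Real.exp (-x ^ 2 / 2)

noncomputable def stdCdf (x : ℝ) : ℝ := ∫ t in Set.Iic x, stdPhi t

noncomputable def snCdf (l x : ℝ) : ℝ := ∫ t in Set.Iic x, 2 * stdPhi t * stdCdf (l * t)

noncomputable def stdTail (x : ℝ) : ℝ := ∫ t in Set.Ioi x, stdPhi t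

lemma stdPhi_def (x : ℝ) : stdPhi x = (Real.sqrt (2 * Real.pi))⁻¹ * Real.exp (-x ^ 2 / 2) := rfl





lemma stdPhi_pos (x : ℝ) : 0 < stdPhi x := by
  unfold stdPhi
  positivity

lemma stdPhi_cont : Continuous stdPhi := by
  unfold stdPhi; fun_prop

lemma stdPhi_integrable : Integrable stdPhi := by
  have h := (integrable_exp_neg_mul_sq (by norm_num : (0:ℝ) < 1/2)).const_mul
    (Real.sqrt (2 * Real.pi))⁻¹
  refine h.congr (Eventually.of_forall fun t => ?_)
  unfold stdPhi; ring_nf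

lemma stdPhi_even (x : ℝ) : stdPhi (-x) = stdPhi x := by
  simp [stdPhi, neg_pow]

lemma integral_stdPhi : ∫ t, stdPhi t = 1 := by
  have h1 : (∫ t : ℝ, Real.exp (-(1/2) * t ^ 2)) = Real.sqrt (2 * Real.pi) := by
    rw [integral_gaussian]
    rw [show Real.pi / (1/2) = 2 * Real.pi by ring]
  have : (∫ t, stdPhi t) = (Real.sqrt (2 * Real.pi))⁻¹ * ∫ t : ℝ, Real.exp (-(1/2) * t ^ 2) := by
    rw [← MeasureTheory.integral_const_mul]
    congr 1 with t
    unfold stdPhi; ring_nf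
  rw [this, h1, inv_mul_cancel₀ (ne_of_gt (Real.sqrt_pos.mpr (by positivity)))]

lemma hasDerivAt_stdPhi (x : ℝ) : HasDerivAt stdPhi (-x * stdPhi x) x := by
  have h : HasDerivAt (fun t : ℝ => -t ^ 2 / 2) (-x) x := by
    have := ((hasDerivAt_pow 2 x).neg).div_const 2
    exact this.congr_deriv (by norm_num; ring)
  have h2 := (h.exp).const_mul (Real.sqrt (2 * Real.pi))⁻¹
  exact h2.congr_deriv (by unfold stdPhi; ring)


lemma stdPhi_tendsto : Tendsto stdPhi atTop (𝓝 0) := by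
  have h1 : Tendsto (fun x : ℝ => -x ^ 2 / 2) atTop atBot := by
    apply Filter.Tendsto.atBot_div_const (by norm_num : (0:ℝ) < 2)
    exact tendsto_neg_atBot_iff.mpr (by simpa using tendsto_pow_atTop (two_ne_zero))
  have h2 := Real.tendsto_exp_atBot.comp h1
  have h3 := h2.const_mul (Real.sqrt (2 * Real.pi))⁻¹
  rw [mul_zero] at h3
  refine h3.congr fun x => ?_
  simp [stdPhi_def, Function.comp]

lemma stdCdf_add_tail (x : ℝ) : stdCdf x + stdTail x = 1 := by
  rw [stdCdf, stdTail, intervalIntegral.integral_Iic_add_Ioi stdPhi_integrable.integrableOn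
    stdPhi_integrable.integrableOn, integral_stdPhi]

lemma stdTail_nonneg (x : ℝ) : 0 ≤ stdTail x :=
  setIntegral_nonneg measurableSet_Ioi fun t _ => (stdPhi_pos t).le

lemma stdCdf_nonneg (x : ℝ) : 0 ≤ stdCdf x :=
  setIntegral_nonneg measurableSet_Iic fun t _ => (stdPhi_pos t).le

lemma stdCdf_le_one (x : ℝ) : stdCdf x ≤ 1 := by
  have := stdCdf_add_tail x
  have := stdTail_nonneg x
  linarith

lemma stdCdf_mono : Monotone stdCdf := by
  intro a b hab
  exact setIntegral_mono_set stdPhi_integrable.integrableOn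
    (Eventually.of_forall fun t => (stdPhi_pos t).le)
    (HasSubset.Subset.eventuallyLE (Iic_subset_Iic.mpr hab))

lemma stdCdf_measurable : Measurable stdCdf := stdCdf_mono.measurable

lemma stdCdf_neg (x : ℝ) : stdCdf (-x) = stdTail x := by
  rw [stdCdf, stdTail]
  have : (∫ t in Set.Iic (-x), stdPhi t) = ∫ t in Set.Iic (-x), stdPhi (-t) := by
    congr 1 with t
    rw [stdPhi_even]
  rw [this, integral_comp_neg_Iic, neg_neg]

-- integrability of stdPhi t / t^n on Ioi a, a > 0
lemma integrableOn_stdPhi_div_pow {a : ℝ} (ha : 0 < a) (n : ℕ) :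
    IntegrableOn (fun t => stdPhi t / t ^ n) (Set.Ioi a) := by
  refine Integrable.mono' ((stdPhi_integrable.restrict).const_mul (a ^ n)⁻¹)
    ?_ ?_
  · exact ((stdPhi_cont.measurable.div (measurable_id.pow_const n)).aestronglyMeasurable)
  · filter_upwards [ae_restrict_mem measurableSet_Ioi] with t ht
    have ht' : a ≤ t := le_of_lt ht
    have htpos : 0 < t := lt_trans ha ht
    have hphi := (stdPhi_pos t).le
    rw [Real.norm_eq_abs, abs_of_nonneg (by positivity)]
    rw [div_eq_mul_inv, mul_comm ((a:ℝ) ^ n)⁻¹ _]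
    apply mul_le_mul_of_nonneg_left _ (stdPhi_pos t).le
    exact inv_anti₀ (by positivity) (pow_le_pow_left₀ ha.le ht' n)

-- integrability of t * stdPhi t on Ioi a
lemma integrableOn_mul_stdPhi (a : ℝ) :
    IntegrableOn (fun t => t * stdPhi t) (Set.Ioi a) := by
  have h := (integrable_mul_exp_neg_mul_sq (by norm_num : (0:ℝ) < 1/2)).const_mul
    (Real.sqrt (2 * Real.pi))⁻¹
  refine (h.congr (Eventually.of_forall fun t => ?_)).restrict
  rw [stdPhi_def]; ring_nf

-- FTC: ∫_{Ioi a} t φ(t) = φ(a)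
lemma integral_mul_stdPhi {a : ℝ} :
    (∫ t in Set.Ioi a, t * stdPhi t) = stdPhi a := by
  have h := integral_Ioi_of_hasDerivAt_of_tendsto'
    (f := fun t => -stdPhi t) (f' := fun t => t * stdPhi t) (a := a) (m := 0)
    (fun t _ => ((hasDerivAt_stdPhi t).neg).congr_deriv (by ring))
    (integrableOn_mul_stdPhi a) (by simpa using stdPhi_tendsto.neg)
  simpa using h

-- tail bound : stdTail u ≤ stdPhi u / u for u > 0
lemma stdTail_le {u : ℝ} (hu : 0 < u) : stdTail u ≤ stdPhi u / u := by
  have h1 : stdTail u ≤ ∫ t in Set.Ioi u, (t / u) * stdPhi t := by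
    refine setIntegral_mono_on stdPhi_integrable.integrableOn
      ?_ measurableSet_Ioi fun t ht => ?_
    · exact ((integrableOn_mul_stdPhi u).const_mul u⁻¹).congr
        (Eventually.of_forall fun t => by ring)
    · have : (1:ℝ) ≤ t / u := (one_le_div hu).mpr (le_of_lt ht)
      nlinarith [stdPhi_pos t]
  have h2 : (∫ t in Set.Ioi u, (t / u) * stdPhi t) = stdPhi u / u := by
    rw [show (fun t => (t / u) * stdPhi t) = fun t => u⁻¹ * (t * stdPhi t) by ext t; ring,
      MeasureTheory.integral_const_mul, integral_mul_stdPhi]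
    ring
  linarith

-- L1 and L2 combined, generic: for a > 0 and odd k,

lemma L1 {a : ℝ} (ha : 0 < a) :
    (∫ t in Set.Ioi a, (stdPhi t + stdPhi t / t ^ 2)) = stdPhi a / a := by
  have hder : ∀ t ∈ Set.Ici a, HasDerivAt (fun t => -(stdPhi t / t))
      (stdPhi t + stdPhi t / t ^ 2) t := by
    intro t ht
    have htpos : 0 < t := lt_of_lt_of_le ha ht
    have h := ((hasDerivAt_stdPhi t).div (hasDerivAt_id t) (ne_of_gt htpos)).neg
    exact h.congr_deriv (by simp only [id]; field_simp; ring)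
  have hint : IntegrableOn (fun t => stdPhi t + stdPhi t / t ^ 2) (Set.Ioi a) :=
    stdPhi_integrable.integrableOn.add (integrableOn_stdPhi_div_pow ha 2)
  have hlim : Tendsto (fun t => -(stdPhi t / t)) atTop (𝓝 0) := by
    have := (stdPhi_tendsto.mul tendsto_inv_atTop_zero).neg
    simp only [zero_mul, neg_zero] at this
    exact this.congr fun t => by rw [div_eq_mul_inv]
  have := integral_Ioi_of_hasDerivAt_of_tendsto' hder hint hlim
  rw [this]
  ring

lemma L2 {a : ℝ} (ha : 0 < a) :
    (∫ t in Set.Ioi a, (stdPhi t / t ^ 2 + 3 * (stdPhi t / t ^ 4))) = stdPhi a / a ^ 3 := by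
  have hder : ∀ t ∈ Set.Ici a, HasDerivAt (fun t => -(stdPhi t / t ^ 3))
      (stdPhi t / t ^ 2 + 3 * (stdPhi t / t ^ 4)) t := by
    intro t ht
    have htpos : 0 < t := lt_of_lt_of_le ha ht
    have h := ((hasDerivAt_stdPhi t).div (hasDerivAt_pow 3 t) (by positivity)).neg
    exact h.congr_deriv (by field_simp; ring)
  have hint : IntegrableOn (fun t => stdPhi t / t ^ 2 + 3 * (stdPhi t / t ^ 4)) (Set.Ioi a) :=
    (integrableOn_stdPhi_div_pow ha 2).add ((integrableOn_stdPhi_div_pow ha 4).const_mul 3)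
  have hlim : Tendsto (fun t => -(stdPhi t / t ^ 3)) atTop (𝓝 0) := by
    have h1 : Tendsto (fun t : ℝ => (t ^ 3)⁻¹) atTop (𝓝 0) :=
      (tendsto_pow_atTop (by norm_num)).inv_tendsto_atTop
    have := (stdPhi_tendsto.mul h1).neg
    simp only [zero_mul, neg_zero] at this
    exact this.congr fun t => by rw [div_eq_mul_inv]
  have := integral_Ioi_of_hasDerivAt_of_tendsto' hder hint hlim
  rw [this]
  ring

-- strict: ∫_{Ioi a} stdPhi/t^2 < stdPhi a / a^3
lemma int_div_sq_lt {a : ℝ} (ha : 0 < a) :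
    (∫ t in Set.Ioi a, stdPhi t / t ^ 2) < stdPhi a / a ^ 3 := by
  have hsplit : (∫ t in Set.Ioi a, (stdPhi t / t ^ 2 + 3 * (stdPhi t / t ^ 4)))
      = (∫ t in Set.Ioi a, stdPhi t / t ^ 2) + ∫ t in Set.Ioi a, 3 * (stdPhi t / t ^ 4) :=
    integral_add (integrableOn_stdPhi_div_pow ha 2)
      ((integrableOn_stdPhi_div_pow ha 4).const_mul 3)
  have hpos : 0 < ∫ t in Set.Ioi a, 3 * (stdPhi t / t ^ 4) := by
    rw [setIntegral_pos_iff_support_of_nonneg_ae]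
    · rw [show (Function.support fun t => 3 * (stdPhi t / t ^ 4)) ∩ Set.Ioi a = Set.Ioi a from ?_]
      · simp [ha]
      · apply Set.inter_eq_right.mpr
        intro t ht
        have : 0 < t := lt_trans ha ht
        have := stdPhi_pos t
        simp only [Function.mem_support]
        positivity
    · filter_upwards [ae_restrict_mem measurableSet_Ioi] with t ht
      have : 0 < t := lt_trans ha ht
      have := stdPhi_pos t
      positivity
    · exact (integrableOn_stdPhi_div_pow ha 4).const_mul 3
  have := L2 ha
  linarith [hsplit ▸ this]

lemma snIntegrand_integrable (l : ℝ) : Integrable (fun t => 2 * stdPhi t * stdCdf (l * t)) := by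
  refine Integrable.mono' (stdPhi_integrable.const_mul 2) ?_ ?_
  · exact (((stdPhi_cont.measurable.const_mul 2).mul
      (stdCdf_measurable.comp (measurable_const_mul l))).aestronglyMeasurable)
  · refine Eventually.of_forall fun t => ?_
    have h1 := stdPhi_pos t
    have h2 := stdCdf_nonneg (l * t)
    have h3 := stdCdf_le_one (l * t)
    rw [Real.norm_eq_abs, abs_of_nonneg (by positivity)]
    nlinarith

lemma snIntegral_total (l : ℝ) : (∫ t, 2 * stdPhi t * stdCdf (l * t)) = 1 := by
  set J := ∫ t, 2 * stdPhi t * stdCdf (l * t) with hJ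
  have hneg : (∫ t : ℝ, 2 * stdPhi (-t) * stdCdf (l * -t)) = J := by
    rw [hJ, ← MeasureTheory.integral_neg_eq_self (fun t => 2 * stdPhi t * stdCdf (l * t))]
  have heq : (fun t : ℝ => 2 * stdPhi (-t) * stdCdf (l * -t))
      = fun t => 2 * stdPhi t - 2 * stdPhi t * stdCdf (l * t) := by
    ext t
    rw [stdPhi_even, show l * -t = -(l * t) by ring, stdCdf_neg]
    have := stdCdf_add_tail (l * t)
    nlinarith [stdPhi_pos t]
  rw [heq] at hneg
  rw [integral_sub (stdPhi_integrable.const_mul 2) (snIntegrand_integrable l)] at hneg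
  rw [MeasureTheory.integral_const_mul, integral_stdPhi] at hneg
  linarith

lemma one_sub_snCdf (l x : ℝ) :
    1 - snCdf l x = ∫ t in Set.Ioi x, 2 * stdPhi t * stdCdf (l * t) := by
  have := intervalIntegral.integral_Iic_add_Ioi (b := x)
    (snIntegrand_integrable l).integrableOn (snIntegrand_integrable l).integrableOn
  rw [snIntegral_total l] at this
  rw [snCdf]
  linarith

lemma sqrt_two_pi_e : Real.sqrt (2 * Real.pi * Real.exp 1)
    = Real.sqrt (2 * Real.pi) * Real.exp (1 / 2) := by
  rw [Real.sqrt_mul (by positivity), show Real.exp 1 = (Real.exp (1/2)) ^ 2 by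
    rw [← Real.exp_nat_mul]; norm_num,
    Real.sqrt_sq (Real.exp_pos _).le]

lemma mul_exp_le {u : ℝ} (hu : 0 < u) : u * Real.exp (-u ^ 2 / 2) ≤ Real.exp (-(1:ℝ) / 2) := by
  have hlog : Real.log u ≤ (u ^ 2 - 1) / 2 := by
    have h1 := Real.log_le_sub_one_of_pos hu
    nlinarith [sq_nonneg (u - 1)]
  have h2 : u * Real.exp (-u ^ 2 / 2) = Real.exp (Real.log u + -u ^ 2 / 2) := by
    rw [Real.exp_add, Real.exp_log hu]
  rw [h2]
  exact Real.exp_le_exp.mpr (by linarith)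

lemma phi_mul_le {u : ℝ} (hu : 0 < u) :
    stdPhi u * u ≤ 1 / Real.sqrt (2 * Real.pi * Real.exp 1) := by
  rw [stdPhi_def, sqrt_two_pi_e]
  have h3 := mul_exp_le hu
  have hs : 0 < Real.sqrt (2 * Real.pi) := Real.sqrt_pos.mpr (by positivity)
  have he : Real.exp (-(1:ℝ)/2) = (Real.exp ((1:ℝ)/2))⁻¹ := by
    rw [show (-(1:ℝ)/2) = -((1:ℝ)/2) by ring, Real.exp_neg]
  have heq : (1:ℝ) / (Real.sqrt (2 * Real.pi) * Real.exp (1/2))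
      = (Real.sqrt (2 * Real.pi))⁻¹ * Real.exp (-(1:ℝ)/2) := by
    rw [he]; field_simp
  rw [heq]
  have := mul_le_mul_of_nonneg_left h3 (inv_nonneg.mpr hs.le)
  calc (Real.sqrt (2 * Real.pi))⁻¹ * Real.exp (-u ^ 2 / 2) * u
      = (Real.sqrt (2 * Real.pi))⁻¹ * (u * Real.exp (-u ^ 2 / 2)) := by ring
    _ ≤ (Real.sqrt (2 * Real.pi))⁻¹ * Real.exp (-(1:ℝ)/2) := this

lemma tail_pointwise {l t : ℝ} (hl : 0 < l) (ht : 0 < t) :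
    stdTail (l * t) ≤ 1 / (l ^ 2 * Real.sqrt (2 * Real.pi * Real.exp 1)) * (1 / t ^ 2) := by
  have hu : 0 < l * t := by positivity
  have hS : 0 < Real.sqrt (2 * Real.pi * Real.exp 1) := Real.sqrt_pos.mpr (by positivity)
  have h1 := stdTail_le hu
  have h2 : stdPhi (l * t) / (l * t)
      ≤ 1 / (l ^ 2 * Real.sqrt (2 * Real.pi * Real.exp 1)) * (1 / t ^ 2) := by
    have h3 := phi_mul_le hu
    have hphi := (stdPhi_pos (l * t)).le
    calc stdPhi (l * t) / (l * t) = (stdPhi (l * t) * (l * t)) / (l * t) ^ 2 := by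
          field_simp
      _ ≤ (1 / Real.sqrt (2 * Real.pi * Real.exp 1)) / (l * t) ^ 2 := by gcongr
      _ = 1 / (l ^ 2 * Real.sqrt (2 * Real.pi * Real.exp 1)) * (1 / t ^ 2) := by
          field_simp
  linarith

lemma stdTail_measurable : Measurable stdTail := by
  have : stdTail = fun u => 1 - stdCdf u := by
    ext u; have := stdCdf_add_tail u; linarith
  rw [this]
  exact measurable_const.sub stdCdf_measurable

lemma stdTail_le_one (u : ℝ) : stdTail u ≤ 1 := by
  have := stdCdf_add_tail u; have := stdCdf_nonneg u; linarith

lemma tailterm_integrable (l x : ℝ) :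
    IntegrableOn (fun t => 2 * stdPhi t * stdTail (l * t)) (Set.Ioi x) := by
  refine Integrable.mono' ((stdPhi_integrable.const_mul 2).restrict) ?_ ?_
  · exact (((stdPhi_cont.measurable.const_mul 2).mul
      (stdTail_measurable.comp (measurable_const_mul l))).aestronglyMeasurable)
  · refine Eventually.of_forall fun t => ?_
    have h1 := stdPhi_pos t
    have h2 := stdTail_nonneg (l * t)
    have h3 := stdTail_le_one (l * t)
    rw [Real.norm_eq_abs, abs_of_nonneg (by positivity)]
    nlinarith

theorem stmt_2 (l : ℝ) (hl : 0 < l) (x : ℝ) (hx : 0 < x) :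
    1 - snCdf l x >
      (2 * stdPhi x / x) * (1 - (1 + 1 / (l ^ 2 * Real.sqrt (2 * Real.pi * Real.exp 1))) * x⁻¹ ^ 2) := by
  set c : ℝ := 1 / (l ^ 2 * Real.sqrt (2 * Real.pi * Real.exp 1)) with hc
  have hS : 0 < Real.sqrt (2 * Real.pi * Real.exp 1) := Real.sqrt_pos.mpr (by positivity)
  have hcpos : 0 < c := by rw [hc]; positivity
  -- split integral
  have hsplitA : (∫ t in Set.Ioi x, stdPhi t)
      = stdPhi x / x - ∫ t in Set.Ioi x, stdPhi t / t ^ 2 := by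
    have h := L1 hx
    rw [integral_add stdPhi_integrable.integrableOn (integrableOn_stdPhi_div_pow hx 2)] at h
    linarith
  set A : ℝ := ∫ t in Set.Ioi x, stdPhi t / t ^ 2 with hA
  have hAlt : A < stdPhi x / x ^ 3 := int_div_sq_lt hx
  have hAnn : 0 ≤ A :=
    setIntegral_nonneg measurableSet_Ioi fun t ht =>
      div_nonneg (stdPhi_pos t).le (by nlinarith [lt_trans hx ht])
  -- tail term bound
  set B : ℝ := ∫ t in Set.Ioi x, 2 * stdPhi t * stdTail (l * t) with hB
  have hBle : B ≤ 2 * c * A := by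
    have hmono : B ≤ ∫ t in Set.Ioi x, 2 * c * (stdPhi t / t ^ 2) := by
      refine setIntegral_mono_on (tailterm_integrable l x)
        ((integrableOn_stdPhi_div_pow hx 2).const_mul (2 * c)) measurableSet_Ioi
        fun t ht => ?_
      have ht0 : 0 < t := lt_trans hx ht
      have h := mul_le_mul_of_nonneg_left (tail_pointwise hl ht0)
        (show (0:ℝ) ≤ 2 * stdPhi t by linarith [stdPhi_pos t])
      have heq : 2 * stdPhi t * (1 / (l ^ 2 * Real.sqrt (2 * Real.pi * Real.exp 1)) * (1 / t ^ 2))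
          = 2 * c * (stdPhi t / t ^ 2) := by rw [hc]; ring
      linarith
    rw [MeasureTheory.integral_const_mul] at hmono
    linarith
  -- represent 1 - snCdf
  have hrep : 1 - snCdf l x = 2 * (∫ t in Set.Ioi x, stdPhi t) - B := by
    rw [one_sub_snCdf]
    have heq : ∀ t : ℝ, 2 * stdPhi t * stdCdf (l * t)
        = 2 * stdPhi t - 2 * stdPhi t * stdTail (l * t) := by
      intro t
      have := stdCdf_add_tail (l * t)
      nlinarith [stdPhi_pos t]
    rw [show (fun t => 2 * stdPhi t * stdCdf (l * t))
        = fun t => 2 * stdPhi t - 2 * stdPhi t * stdTail (l * t) from funext heq]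
    rw [integral_sub ((stdPhi_integrable.const_mul 2).restrict) (tailterm_integrable l x),
      MeasureTheory.integral_const_mul]
  -- conclude
  have hx0 : x ≠ 0 := ne_of_gt hx
  have hBc : B ≤ 2 * c * (stdPhi x / x ^ 3) := by nlinarith [hAlt.le, hcpos, hBle]
  have hRHS : (2 * stdPhi x / x) * (1 - (1 + c) * x⁻¹ ^ 2)
      = 2 * (stdPhi x / x) - 2 * (1 + c) * (stdPhi x / x ^ 3) := by
    field_simp
  rw [hrep, hsplitA, hRHS]
  linarith [hAlt, hBc]
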